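/- For n > 2 and p prime, the family of all subgroups of order p of the elementary abelian group Cpⁿ is an irredundant cover of Cpⁿ, while σ(Cpⁿ) = p+1; hence for n > 2 the group Cpⁿ has an irredundant cover that is not of minimal size. -/

import Mathlib

def IsCover {G : Type*} [Group G] (S : Set (Subgroup G)) : Prop :=
  (∀ H ∈ S, H ≠ (⊤ : Subgroup G)) ∧ ∀ g : G, ∃ H ∈ S, g ∈ H

def IsIrredundantCover {G : Type*} [Group G] (S : Set (Subgroup G)) : Prop :=
  IsCover S ∧ ∀ T : Set (Subgroup G), T ⊂ S → ¬ IsCover T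

def IsMaxCyclic {G : Type*} [Group G] (C : Subgroup G) : Prop :=
  IsCyclic C ∧ ∀ D : Subgroup G, IsCyclic D → C ≤ D → C = D

def OnlyOneSizedCovers (G : Type*) [Group G] : Prop :=
  ∀ S T : Set (Subgroup G), IsIrredundantCover S → IsIrredundantCover T →
    S.ncard = T.ncard

noncomputable def coverNumber (G : Type*) [Group G] : ℕ :=
  sInf {n : ℕ | ∃ S : Set (Subgroup G), IsCover S ∧ S.ncard = n}


open Subgroup

private lemma aux_biUnion_ncard_le {α β : Type*} [Finite β] {s : Set α} (hs : s.Finite)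
    (f : α → Set β) {c : ℕ} (hc : ∀ a ∈ s, (f a).ncard ≤ c) :
    (⋃ a ∈ s, f a).ncard ≤ s.ncard * c := by
  revert hc
  refine Set.Finite.induction_on (motive := fun s _ => (∀ a ∈ s, (f a).ncard ≤ c) →
    (⋃ a ∈ s, f a).ncard ≤ s.ncard * c) s hs (by simp) ?_
  intro a s ha hs ih hc
  rw [Set.biUnion_insert]
  calc (f a ∪ ⋃ x ∈ s, f x).ncard ≤ (f a).ncard + (⋃ x ∈ s, f x).ncard :=
        Set.ncard_union_le _ _
    _ ≤ c + s.ncard * c :=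
        Nat.add_le_add (hc a (Set.mem_insert a s))
          (ih fun b hb => hc b (Set.mem_insert_of_mem a hb))
    _ = (insert a s).ncard * c := by
        rw [Set.ncard_insert_of_notMem ha hs]; ring

private lemma aux_count {G : Type*} [Group G] [Finite G] {S : Set (Subgroup G)} {c : ℕ}
    (hcov : ∀ g : G, g ≠ 1 → ∃ H ∈ S, g ∈ H) (hc : ∀ H ∈ S, Nat.card H ≤ c) :
    Nat.card G - 1 ≤ S.ncard * (c - 1) := by
  have hsub : (Set.univ \ {1} : Set G) ⊆ ⋃ H ∈ S, ((H : Set G) \ {1}) := by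
    rintro g ⟨-, hg⟩
    obtain ⟨H, hH, hgH⟩ := hcov g hg
    exact Set.mem_biUnion hH ⟨hgH, hg⟩
  calc Nat.card G - 1 = (Set.univ \ {1} : Set G).ncard := by
        rw [Set.ncard_diff_singleton_of_mem (Set.mem_univ 1), Set.ncard_univ]
    _ ≤ (⋃ H ∈ S, ((H : Set G) \ {1})).ncard := Set.ncard_le_ncard hsub (Set.toFinite _)
    _ ≤ S.ncard * (c - 1) := aux_biUnion_ncard_le (Set.toFinite S) _ (fun H hH => by
        rw [Set.ncard_diff_singleton_of_mem H.one_mem, ← Nat.card_coe_set_eq]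
        exact Nat.sub_le_sub_right (hc H hH) 1)

private lemma aux_cardG (p n : ℕ) [NeZero p] :
    Nat.card (Multiplicative (Fin n → ZMod p)) = p ^ n := by
  show Nat.card (Fin n → ZMod p) = p ^ n
  simp [Nat.card_eq_fintype_card, ZMod.card]

private lemma aux_pow_p (p n : ℕ) (g : Multiplicative (Fin n → ZMod p)) : g ^ p = 1 := by
  have : Multiplicative.toAdd (g ^ p) = Multiplicative.toAdd (1 : Multiplicative (Fin n → ZMod p)) := by
    rw [toAdd_pow, toAdd_one]
    funext i
    show p • (Multiplicative.toAdd g i) = 0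
    simp [nsmul_eq_mul, ZMod.natCast_self]
  exact Multiplicative.toAdd.injective this

private lemma aux_zpowers_card (p n : ℕ) (hp : p.Prime)
    (g : Multiplicative (Fin n → ZMod p)) (hg : g ≠ 1) :
    Nat.card (zpowers g) = p := by
  haveI : Fact p.Prime := ⟨hp⟩
  rw [Nat.card_zpowers]
  exact orderOf_eq_prime (aux_pow_p p n g) hg

private lemma aux_eq_zpowers (p n : ℕ) (hp : p.Prime)
    {H : Subgroup (Multiplicative (Fin n → ZMod p))} (hH : Nat.card H = p)
    {g : Multiplicative (Fin n → ZMod p)} (hgH : g ∈ H) (hg : g ≠ 1) :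
    H = zpowers g := by
  haveI : NeZero p := ⟨hp.ne_zero⟩
  exact (Subgroup.eq_of_le_of_card_ge (zpowers_le.mpr hgH)
    (by rw [hH, aux_zpowers_card p n hp g hg])).symm

private lemma aux_proper (p n : ℕ) (hp : p.Prime) (hn : 2 < n)
    {H : Subgroup (Multiplicative (Fin n → ZMod p))} (hH : Nat.card H = p) :
    H ≠ ⊤ := by
  haveI : NeZero p := ⟨hp.ne_zero⟩
  intro htop
  rw [htop, Subgroup.card_top, aux_cardG p n] at hH
  have h1 : p ^ 1 < p ^ n := Nat.pow_lt_pow_right hp.one_lt (by omega)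
  rw [pow_one] at h1
  omega

/-- the element δ_{i,v} : indicator-like vector -/
private def aux_vec (p n : ℕ) (hn : 2 < n) (a b : ZMod p) : Multiplicative (Fin n → ZMod p) :=
  Multiplicative.ofAdd (fun i => if i = (⟨0, by omega⟩ : Fin n) then a
    else if i = (⟨1, by omega⟩ : Fin n) then b else 0)

private lemma aux_part1 (p n : ℕ) (hp : p.Prime) (hn : 2 < n) :
    IsIrredundantCover
      {H : Subgroup (Multiplicative (Fin n → ZMod p)) | Nat.card H = p} := by
  haveI : Fact p.Prime := ⟨hp⟩
  haveI : NeZero p := ⟨hp.ne_zero⟩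
  have hone : aux_vec p n hn 1 0 ≠ 1 := by
    intro h
    have := congrFun (Multiplicative.ofAdd.injective (h.trans (ofAdd_zero).symm)) ⟨0, by omega⟩
    simp [aux_vec] at this
  have hcov : IsCover {H : Subgroup (Multiplicative (Fin n → ZMod p)) | Nat.card H = p} := by
    constructor
    · exact fun H hH => aux_proper p n hp hn hH
    · intro g
      by_cases hg : g = 1
      · exact ⟨zpowers (aux_vec p n hn 1 0), aux_zpowers_card p n hp _ hone,
          hg ▸ Subgroup.one_mem _⟩
      · exact ⟨zpowers g, aux_zpowers_card p n hp g hg, Subgroup.mem_zpowers g⟩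
  refine ⟨hcov, ?_⟩
  rintro T hT ⟨-, hTcov⟩
  obtain ⟨H, hHS, hHT⟩ := Set.exists_of_ssubset hT
  -- H has an element ≠ 1
  have hne : ∃ g ∈ H, g ≠ (1 : Multiplicative (Fin n → ZMod p)) := by
    by_contra h
    push_neg at h
    have hbot : H = ⊥ := by
      ext x
      simp only [Subgroup.mem_bot]
      exact ⟨fun hx => by by_contra hne; exact hne (h x hx), fun hx => hx ▸ H.one_mem⟩
    have hcb : Nat.card (⊥ : Subgroup (Multiplicative (Fin n → ZMod p))) = p := hbot ▸ hHS
    rw [Subgroup.card_bot] at hcb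
    have := hp.two_le
    omega
  obtain ⟨g, hgH, hg⟩ := hne
  obtain ⟨K, hKT, hgK⟩ := hTcov g
  have hKS : Nat.card K = p := hT.1 hKT
  have : K = H := by
    rw [aux_eq_zpowers p n hp hKS hgK hg, aux_eq_zpowers p n hp hHS hgH hg]
  exact hHT (this ▸ hKT)

/-- linear functionals cutting out the p+1 hyperplanes -/
private def aux_func (p n : ℕ) (hn : 2 < n) (o : Option (ZMod p)) :
    (Fin n → ZMod p) →+ ZMod p :=
  match o with
  | none => AddMonoidHom.mk' (fun x => x ⟨1, by omega⟩) (fun _ _ => rfl)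
  | some a => AddMonoidHom.mk' (fun x => x ⟨0, by omega⟩ - a * x ⟨1, by omega⟩)
      (fun x y => by simp only [Pi.add_apply]; ring)

private def aux_ker (p n : ℕ) (hn : 2 < n) (o : Option (ZMod p)) :
    Subgroup (Multiplicative (Fin n → ZMod p)) where
  carrier := {g | aux_func p n hn o (Multiplicative.toAdd g) = 0}
  one_mem' := by simp only [Set.mem_setOf_eq, toAdd_one, map_zero]
  mul_mem' := by
    intro a b ha hb
    simp only [Set.mem_setOf_eq, toAdd_mul, map_add] at *
    rw [ha, hb, add_zero]
  inv_mem' := by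
    intro a ha
    simp only [Set.mem_setOf_eq, toAdd_inv, map_neg] at *
    rw [ha, neg_zero]

private lemma aux_mem_ker (p n : ℕ) (hn : 2 < n) (o : Option (ZMod p))
    (g : Multiplicative (Fin n → ZMod p)) :
    g ∈ aux_ker p n hn o ↔ aux_func p n hn o (Multiplicative.toAdd g) = 0 := Iff.rfl

private lemma aux_func_vec (p n : ℕ) (hn : 2 < n) (a b : ZMod p) :
    (∀ c : ZMod p, aux_func p n hn (some c) (Multiplicative.toAdd (aux_vec p n hn a b)) = a - c * b) ∧
    aux_func p n hn none (Multiplicative.toAdd (aux_vec p n hn a b)) = b := by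
  constructor
  · intro c
    show (fun i => if i = (⟨0, by omega⟩ : Fin n) then a
        else if i = (⟨1, by omega⟩ : Fin n) then b else 0) ⟨0, by omega⟩
      - c * (fun i => if i = (⟨0, by omega⟩ : Fin n) then a
        else if i = (⟨1, by omega⟩ : Fin n) then b else 0) ⟨1, by omega⟩ = a - c * b
    simp [Fin.ext_iff]
  · show (fun i => if i = (⟨0, by omega⟩ : Fin n) then a
        else if i = (⟨1, by omega⟩ : Fin n) then b else 0) ⟨1, by omega⟩ = b
    simp [Fin.ext_iff]

private lemma aux_cover_range (p n : ℕ) (hp : p.Prime) (hn : 2 < n) :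
    IsCover (Set.range (aux_ker p n hn)) ∧ (Set.range (aux_ker p n hn)).ncard = p + 1 := by
  haveI : Fact p.Prime := ⟨hp⟩
  haveI : NeZero p := ⟨hp.ne_zero⟩
  have hproper : ∀ o, aux_ker p n hn o ≠ ⊤ := by
    intro o htop
    match o with
    | none =>
        have h1 : aux_vec p n hn 0 1 ∈ aux_ker p n hn none := htop ▸ Subgroup.mem_top _
        rw [aux_mem_ker, (aux_func_vec p n hn 0 1).2] at h1
        exact one_ne_zero h1
    | some a =>
        have h1 : aux_vec p n hn 1 0 ∈ aux_ker p n hn (some a) := htop ▸ Subgroup.mem_top _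
        rw [aux_mem_ker, (aux_func_vec p n hn 1 0).1 a] at h1
        simp at h1
  have hinj : Function.Injective (aux_ker p n hn) := by
    intro o o' h
    match o, o' with
    | none, none => rfl
    | some a, some b =>
        have hmem : aux_vec p n hn a 1 ∈ aux_ker p n hn (some a) := by
          rw [aux_mem_ker, (aux_func_vec p n hn a 1).1 a]; ring
        rw [h, aux_mem_ker, (aux_func_vec p n hn a 1).1 b] at hmem
        have : a = b := by
          have := sub_eq_zero.mp hmem
          simpa using this
        rw [this]
    | none, some a =>
        have hmem : aux_vec p n hn a 1 ∈ aux_ker p n hn (some a) := by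
          rw [aux_mem_ker, (aux_func_vec p n hn a 1).1 a]; ring
        rw [← h, aux_mem_ker, (aux_func_vec p n hn a 1).2] at hmem
        exact absurd hmem one_ne_zero
    | some a, none =>
        have hmem : aux_vec p n hn a 1 ∈ aux_ker p n hn (some a) := by
          rw [aux_mem_ker, (aux_func_vec p n hn a 1).1 a]; ring
        rw [h, aux_mem_ker, (aux_func_vec p n hn a 1).2] at hmem
        exact absurd hmem one_ne_zero
  refine ⟨⟨?_, ?_⟩, ?_⟩
  · rintro H ⟨o, rfl⟩
    exact hproper o
  · intro g
    by_cases h1 : Multiplicative.toAdd g ⟨1, by omega⟩ = 0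
    · refine ⟨aux_ker p n hn none, Set.mem_range_self _, ?_⟩
      rw [aux_mem_ker]
      exact h1
    · refine ⟨aux_ker p n hn (some (Multiplicative.toAdd g ⟨0, by omega⟩ *
        (Multiplicative.toAdd g ⟨1, by omega⟩)⁻¹)), Set.mem_range_self _, ?_⟩
      rw [aux_mem_ker]
      show Multiplicative.toAdd g ⟨0, by omega⟩ -
        (Multiplicative.toAdd g ⟨0, by omega⟩ * (Multiplicative.toAdd g ⟨1, by omega⟩)⁻¹) *
          Multiplicative.toAdd g ⟨1, by omega⟩ = 0
      field_simp
      simp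
  · rw [← Nat.card_coe_set_eq, Nat.card_range_of_injective hinj,
      Nat.card_eq_fintype_card, Fintype.card_option, ZMod.card]

private lemma aux_lower (p n : ℕ) (hp : p.Prime) (hn : 2 < n)
    {S : Set (Subgroup (Multiplicative (Fin n → ZMod p)))} (hS : IsCover S) :
    p + 1 ≤ S.ncard := by
  haveI : Fact p.Prime := ⟨hp⟩
  haveI : NeZero p := ⟨hp.ne_zero⟩
  have hcard : ∀ H ∈ S, Nat.card H ≤ p ^ (n - 1) := by
    intro H hH
    have hdvd : Nat.card H ∣ p ^ n := by
      have := Subgroup.card_subgroup_dvd_card H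
      rwa [aux_cardG p n] at this
    obtain ⟨k, hk, hkeq⟩ := (Nat.dvd_prime_pow hp).mp hdvd
    have hkn : k ≠ n := by
      intro h
      apply hS.1 H hH
      apply Subgroup.eq_top_of_le_card
      rw [aux_cardG p n, hkeq, h]
    calc Nat.card H = p ^ k := hkeq
      _ ≤ p ^ (n - 1) := Nat.pow_le_pow_right hp.one_le (by omega)
  have hcount := aux_count (fun g _ => hS.2 g) hcard
  rw [aux_cardG p n] at hcount
  set m := S.ncard with hm
  by_contra hle
  push_neg at hle
  have h2 : m * (p ^ (n - 1) - 1) ≤ p * (p ^ (n - 1) - 1) :=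
    Nat.mul_le_mul_right _ (by omega)
  have hq : 2 ≤ p ^ (n - 1) := by
    calc 2 ≤ p := hp.two_le
      _ = p ^ 1 := (pow_one p).symm
      _ ≤ p ^ (n - 1) := Nat.pow_le_pow_right hp.one_le (by omega)
  have hpn : p ^ n = p * p ^ (n - 1) := by
    rw [← pow_succ']
    congr 1
    omega
  set q := p ^ (n - 1) with hqdef
  rw [hpn] at hcount
  have h3 : p * (q - 1) = p * q - p := by
    rw [Nat.mul_sub, mul_one]
  have h4 : p * q - 1 ≤ p * q - p := by
    calc p * q - 1 ≤ m * (q - 1) := hcount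
      _ ≤ p * (q - 1) := h2
      _ = p * q - p := h3
  have h5 : p ≤ p * q := Nat.le_mul_of_pos_right p (by omega)
  have := hp.two_le
  omega

private lemma aux_part3 (p n : ℕ) (hp : p.Prime) (hn : 2 < n) :
    ({H : Subgroup (Multiplicative (Fin n → ZMod p)) | Nat.card H = p}).ncard ≠ p + 1 := by
  haveI : Fact p.Prime := ⟨hp⟩
  haveI : NeZero p := ⟨hp.ne_zero⟩
  intro h
  have hcov := aux_part1 p n hp hn
  have hcount := aux_count (G := Multiplicative (Fin n → ZMod p))
    (S := {H | Nat.card H = p}) (fun g hg => hcov.1.2 g) (fun H hH => le_of_eq hH)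
  rw [aux_cardG p n, h] at hcount
  have h5 : 2 ≤ p := hp.two_le
  have h2 : (p + 1) * (p - 1) + 1 = p * p := by
    obtain ⟨q, rfl⟩ : ∃ q, p = q + 2 := ⟨p - 2, by omega⟩
    show (q + 2 + 1) * (q + 1) + 1 = (q + 2) * (q + 2)
    ring
  have h3 : p ^ 3 ≤ p ^ n := Nat.pow_le_pow_right hp.one_le (by omega)
  have h7 : 2 * (p * p) ≤ p * (p * p) := Nat.mul_le_mul_right _ h5
  have h8 : p * (p * p) = p ^ 3 := by ring
  have h9 : 4 ≤ p * p := Nat.mul_le_mul h5 h5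
  omega

theorem stmt18 (p n : ℕ) (hp : p.Prime) (hn : 2 < n) :
    IsIrredundantCover
      {H : Subgroup (Multiplicative (Fin n → ZMod p)) | Nat.card H = p} ∧
    coverNumber (Multiplicative (Fin n → ZMod p)) = p + 1 ∧
    ∃ S : Set (Subgroup (Multiplicative (Fin n → ZMod p))),
      IsIrredundantCover S ∧ S.ncard ≠ p + 1 := by
  haveI : Fact p.Prime := ⟨hp⟩
  haveI : NeZero p := ⟨hp.ne_zero⟩
  refine ⟨aux_part1 p n hp hn, ?_, ⟨_, aux_part1 p n hp hn, aux_part3 p n hp hn⟩⟩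
  obtain ⟨hcov, hcard⟩ := aux_cover_range p n hp hn
  apply le_antisymm
  · exact Nat.sInf_le ⟨_, hcov, hcard⟩
  · exact le_csInf ⟨p + 1, _, hcov, hcard⟩ (by rintro m ⟨S, hS, rfl⟩; exact aux_lower p n hp hn hS)
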